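/- Let (Ω, ρ) be a compact metric space with a Borel probability measure P, and let M be a dense subset of Ω. Then there exists a sequence {xₙ} with xₙ ∈ M for all n that is uniformly distributed in Ω. -/

import Mathlib

open MeasureTheory Filter Topology

/-- The upper Riemann integral of a bounded function `f` defined on a dense subset `M` of a
compact metric space `Ω` carrying a Borel probability measure `P`:
`∫* f = inf {∫ g dP : g continuous on Ω, g ≥ f on M}`. -/
noncomputable def upperInt {Ω : Type*} [MetricSpace Ω] [MeasurableSpace Ω]
    (P : Measure Ω) (M : Set Ω) (f : M → ℝ) : ℝ :=
  sInf {r : ℝ | ∃ g : C(Ω, ℝ), (∀ x : M, f x ≤ g x) ∧ r = ∫ x, g x ∂P}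

/-- The lower Riemann integral:
`∫_* f = sup {∫ g dP : g continuous on Ω, g ≤ f on M}`. -/
noncomputable def lowerInt {Ω : Type*} [MetricSpace Ω] [MeasurableSpace Ω]
    (P : Measure Ω) (M : Set Ω) (f : M → ℝ) : ℝ :=
  sSup {r : ℝ | ∃ g : C(Ω, ℝ), (∀ x : M, g x ≤ f x) ∧ r = ∫ x, g x ∂P}

/-- A sequence `a : ℕ → Ω` is uniformly distributed in `Ω` with respect to the Borel
probability measure `P` if the averages of `g` along the sequence converge to `∫ g dP`
for every continuous real-valued `g` on `Ω`. -/
def UniformlyDistributed {Ω : Type*} [MetricSpace Ω] [MeasurableSpace Ω]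
    (P : Measure Ω) (a : ℕ → Ω) : Prop :=
  ∀ g : C(Ω, ℝ),
    Tendsto (fun N : ℕ => (∑ n ∈ Finset.range N, g (a n)) / N) atTop (𝓝 (∫ x, g x ∂P))

section UDAux
open Finset


lemma ud_integrable {Ω : Type*} [MetricSpace Ω] [CompactSpace Ω] [MeasurableSpace Ω]
    [BorelSpace Ω] (P : Measure Ω) [IsProbabilityMeasure P] {F : Type*} [NormedAddCommGroup F]
    {g : Ω → F} (hg : Continuous g) :
    Integrable g P :=
  hg.integrable_of_hasCompactSupport
    (IsCompact.of_isClosed_subset isCompact_univ (isClosed_tsupport _) (Set.subset_univ _))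

lemma ud_mem_closure {Ω : Type*} [MetricSpace Ω] [CompactSpace Ω] [MeasurableSpace Ω]
    [BorelSpace Ω] (P : Measure Ω) [IsProbabilityMeasure P] {M : Set Ω} (hM : Dense M)
    {m : ℕ} (G : Fin m → C(Ω, ℝ)) :
    (fun i => ∫ x, G i x ∂P) ∈ closure (convexHull ℝ ((fun x i => G i x) '' M)) := by
  set E : Ω → (Fin m → ℝ) := fun x i => G i x with hE
  have hEc : Continuous E := continuous_pi fun i => (G i).continuous
  have hEint : Integrable E P := ud_integrable P hEc
  have hv : (fun i => ∫ x, G i x ∂P) = ∫ x, E x ∂P := by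
    funext i
    have := (ContinuousLinearMap.proj (R := ℝ) (φ := fun _ : Fin m => ℝ) i).integral_comp_comm hEint
    simpa [hE] using this
  rw [hv]
  by_contra hcon
  obtain ⟨f, u, hfu, huf⟩ := geometric_hahn_banach_closed_point
    ((convex_convexHull ℝ _).closure) isClosed_closure hcon
  have hle : ∀ x : Ω, f (E x) ≤ u := by
    intro x
    have hcl : Continuous fun x => f (E x) := f.continuous.comp hEc
    have hset : IsClosed {x : Ω | f (E x) ≤ u} := isClosed_le hcl continuous_const
    have hMs : M ⊆ {x : Ω | f (E x) ≤ u} := fun y hy =>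
      le_of_lt (hfu _ (subset_closure (subset_convexHull ℝ _ ⟨y, hy, rfl⟩)))
    have := hset.closure_subset_iff.2 hMs
    rw [hM.closure_eq] at this
    exact this (Set.mem_univ x)
  have h1 : f (∫ x, E x ∂P) = ∫ x, f (E x) ∂P := (f.integral_comp_comm hEint).symm
  have h2 : ∫ x, f (E x) ∂P ≤ u := by
    calc ∫ x, f (E x) ∂P ≤ ∫ _, u ∂P := by
          apply integral_mono (f.integrable_comp hEint) (integrable_const u) hle
      _ = u := by simp
  exact absurd (h1 ▸ h2) (not_le.2 huf)



lemma ud_tuple {Ω : Type*} {ι : Type*} [DecidableEq ι] (M : Set Ω) (t : Finset ι) (n : ι → ℕ)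
    (u : ι → Ω) (hu : ∀ i ∈ t, u i ∈ M) :
    ∃ y : Fin (∑ i ∈ t, n i) → Ω, (∀ j, y j ∈ M) ∧
      ∀ g : Ω → ℝ, ∑ j, g (y j) = ∑ i ∈ t, (n i : ℝ) * g (u i) := by
  classical
  set s : Finset (Σ _ : ι, ℕ) := t.sigma (fun i => Finset.range (n i)) with hs
  have hcard : ∑ i ∈ t, n i = s.card := by
    simp [hs, Finset.card_sigma]
  set e := s.equivFin
  refine ⟨fun j => u ((e.symm (Fin.cast hcard j)) : s).1.1, fun j => hu _ ?_, fun g => ?_⟩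
  · have := ((e.symm (Fin.cast hcard j)) : s).2
    exact (Finset.mem_sigma.1 this).1
  · have h1 : ∑ j : Fin (∑ i ∈ t, n i), g (u ((e.symm (Fin.cast hcard j)) : s).1.1)
        = ∑ a : s, g (u (a : Σ _ : ι, ℕ).1) := by
      rw [← Equiv.sum_comp e.symm]
      exact Fintype.sum_equiv (finCongr hcard) _ _ (fun j => rfl)
    rw [h1, Finset.sum_coe_sort s (fun a => g (u a.1)), hs, Finset.sum_sigma]
    simp [mul_comm]



lemma ud_cycle_shift (h : ℕ → ℝ) {ℓ r : ℕ} (hr : r ≤ ℓ) :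
    ∑ i ∈ range ℓ, h ((r + i) % ℓ) = ∑ j ∈ range ℓ, h j := by
  rcases Nat.eq_zero_or_pos ℓ with hl | hl
  · simp [hl]
  have hsplit : ∑ i ∈ range ℓ, h ((r + i) % ℓ)
      = ∑ i ∈ range (ℓ - r), h ((r + i) % ℓ) + ∑ i ∈ Ico (ℓ - r) ℓ, h ((r + i) % ℓ) := by
    rw [range_eq_Ico, ← Finset.sum_Ico_consecutive _ (Nat.zero_le _) (Nat.sub_le ℓ r),
      ← range_eq_Ico]
  have h1 : ∑ i ∈ range (ℓ - r), h ((r + i) % ℓ) = ∑ j ∈ Ico r ℓ, h j := by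
    rw [Finset.sum_Ico_eq_sum_range]
    apply Finset.sum_congr rfl
    intro i hi
    rw [Finset.mem_range] at hi
    rw [Nat.mod_eq_of_lt (by omega)]
  have h2 : ∑ i ∈ Ico (ℓ - r) ℓ, h ((r + i) % ℓ) = ∑ j ∈ range r, h j := by
    rw [Finset.sum_Ico_eq_sum_range]
    have hlen : ℓ - (ℓ - r) = r := by omega
    rw [hlen]
    apply Finset.sum_congr rfl
    intro j hj
    rw [Finset.mem_range] at hj
    have : r + (ℓ - r + j) = ℓ + j := by omega
    rw [this, Nat.add_mod_left, Nat.mod_eq_of_lt (by omega)]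
  rw [hsplit, h1, h2, ← Finset.sum_range_add_sum_Ico _ hr]
  ring

lemma ud_periodic_sum (h : ℕ → ℝ) {ℓ : ℕ} (hl : 0 < ℓ) (q : ℕ) {r : ℕ} (hr : r ≤ ℓ) :
    ∑ j ∈ range (q * ℓ + r), h (j % ℓ)
      = q * (∑ j ∈ range ℓ, h j) + ∑ j ∈ range r, h j := by
  induction q with
  | zero =>
    simp only [Nat.zero_mul, Nat.zero_add, Nat.cast_zero, zero_mul, zero_add]
    apply Finset.sum_congr rfl
    intro j hj
    rw [Finset.mem_range] at hj
    rw [Nat.mod_eq_of_lt (by omega)]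
  | succ q ih =>
    have hsz : (q + 1) * ℓ + r = (q * ℓ + r) + ℓ := by ring
    rw [hsz, Finset.sum_range_add, ih]
    have h2 : ∑ i ∈ range ℓ, h ((q * ℓ + r + i) % ℓ) = ∑ j ∈ range ℓ, h j := by
      have : ∀ i, (q * ℓ + r + i) % ℓ = (r + i) % ℓ := by
        intro i
        conv_lhs => rw [show q * ℓ + r + i = r + i + q * ℓ by ring]
        rw [Nat.add_mul_mod_self_right]
      simp only [this]
      exact ud_cycle_shift h hr
    rw [h2]
    push_cast
    ring

lemma ud_abs4 (a b c d : ℝ) : |a + b - (c + d)| ≤ |a - c| + |b - d| := by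
  have h : a + b - (c + d) = (a - c) + (b - d) := by ring
  rw [h]; exact abs_add_le _ _

lemma ud_block_est {Ω : Type*} (g : Ω → ℝ) (C I δ : ℝ) (hb : ∀ x, |g x| ≤ C) (hI : |I| ≤ C)
    {ℓ : ℕ} (hl : 0 < ℓ) (f : ℕ → Ω) (hf : ∀ j, f j = f (j % ℓ))
    (happ : |(∑ j ∈ range ℓ, g (f j)) / ℓ - I| ≤ δ) (t : ℕ) :
    |∑ j ∈ range t, g (f j) - t * I| ≤ t * δ + 2*C*ℓ := by
  have hC : 0 ≤ C := le_trans (abs_nonneg _) (hI)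
  have hδ : 0 ≤ δ := le_trans (abs_nonneg _) happ
  have hlR : (0:ℝ) < ℓ := by exact_mod_cast hl
  set q := t / ℓ with hq
  set r := t % ℓ with hr
  have ht : t = q * ℓ + r := by rw [hq, hr]; exact (Nat.div_add_mod' t ℓ).symm
  have hrl : r ≤ ℓ := by rw [hr]; exact (Nat.mod_lt t hl).le
  have hsum : ∑ j ∈ range t, g (f j)
      = q * (∑ j ∈ range ℓ, g (f j)) + ∑ j ∈ range r, g (f j) := by
    have h1 : ∀ j, g (f j) = (fun j => g (f j)) (j % ℓ) := fun j => by
      simp only []; rw [← hf j]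
    calc ∑ j ∈ range t, g (f j) = ∑ j ∈ range (q * ℓ + r), (fun j => g (f j)) (j % ℓ) := by
          rw [← ht]; exact Finset.sum_congr rfl fun j _ => h1 j
      _ = q * (∑ j ∈ range ℓ, g (f j)) + ∑ j ∈ range r, g (f j) :=
          ud_periodic_sum (fun j => g (f j)) hl q hrl
  have hSig : |(∑ j ∈ range ℓ, g (f j)) - (ℓ:ℝ) * I| ≤ ℓ * δ := by
    have h2 : (∑ j ∈ range ℓ, g (f j)) - (ℓ:ℝ) * I = ((∑ j ∈ range ℓ, g (f j)) / ℓ - I) * ℓ := by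
      field_simp
    rw [h2, abs_mul, abs_of_pos hlR]
    calc |(∑ j ∈ range ℓ, g (f j)) / ℓ - I| * ℓ ≤ δ * ℓ := by gcongr
      _ = ℓ * δ := by ring
  have hpart : |∑ j ∈ range r, g (f j) - (r:ℝ) * I| ≤ r * (2*C) := by
    have h3 : ∑ j ∈ range r, g (f j) - (r:ℝ) * I = ∑ j ∈ range r, (g (f j) - I) := by
      rw [Finset.sum_sub_distrib, Finset.sum_const, Finset.card_range]
      ring
    rw [h3]
    calc |∑ j ∈ range r, (g (f j) - I)| ≤ ∑ j ∈ range r, |g (f j) - I| :=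
          Finset.abs_sum_le_sum_abs _ _
      _ ≤ ∑ j ∈ range r, 2*C := by
          apply Finset.sum_le_sum
          intro j _
          have := hb (f j)
          have := abs_sub_abs_le_abs_sub (g (f j)) I
          calc |g (f j) - I| ≤ |g (f j)| + |I| := abs_sub _ _
            _ ≤ 2*C := by linarith [hb (f j)]
      _ = r * (2*C) := by rw [Finset.sum_const, Finset.card_range]; simp
  have hqln : (q:ℝ) * ℓ ≤ t := by
    have : q * ℓ ≤ t := by omega
    exact_mod_cast this
  have hrn : (r:ℝ) ≤ ℓ := by exact_mod_cast hrl
  have htI : (t:ℝ) * I = (q:ℝ) * ((ℓ:ℝ) * I) + (r:ℝ) * I := by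
    have : (t:ℝ) = (q:ℝ) * ℓ + r := by exact_mod_cast ht
    rw [this]; ring
  rw [hsum, htI]
  calc |(q:ℝ) * (∑ j ∈ range ℓ, g (f j)) + ∑ j ∈ range r, g (f j)
        - ((q:ℝ) * ((ℓ:ℝ) * I) + (r:ℝ) * I)|
      ≤ |(q:ℝ) * (∑ j ∈ range ℓ, g (f j)) - (q:ℝ) * ((ℓ:ℝ) * I)|
        + |∑ j ∈ range r, g (f j) - (r:ℝ) * I| := ud_abs4 _ _ _ _
    _ ≤ (q:ℝ) * (ℓ * δ) + (r:ℝ) * (2*C) := by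
        apply add_le_add _ hpart
        rw [← mul_sub, abs_mul, abs_of_nonneg (Nat.cast_nonneg q)]
        exact mul_le_mul_of_nonneg_left hSig (Nat.cast_nonneg q)
    _ ≤ t * δ + 2*C*ℓ := by
        have h5 : (q:ℝ) * (ℓ * δ) ≤ t * δ := by
          rw [← mul_assoc]
          exact mul_le_mul_of_nonneg_right hqln hδ
        have h6 : (r:ℝ) * (2*C) ≤ 2*C*ℓ := by nlinarith
        linarith


lemma ud_pattern {Ω : Type*} [MetricSpace Ω] [CompactSpace Ω] [MeasurableSpace Ω]
    [BorelSpace Ω] (P : Measure Ω) [IsProbabilityMeasure P] [Nonempty Ω] {M : Set Ω}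
    (hM : Dense M) {m : ℕ} (G : Fin m → C(Ω, ℝ)) {ε : ℝ} (hε : 0 < ε) :
    ∃ L : ℕ, 0 < L ∧ ∃ y : Fin L → Ω, (∀ j, y j ∈ M) ∧
      ∀ i, |(∑ j, G i (y j)) / L - ∫ x, G i x ∂P| ≤ ε := by
  classical
  set C : ℝ := 1 + ∑ i, ‖G i‖ with hC
  have hC1 : 1 ≤ C := by
    have : (0:ℝ) ≤ ∑ i, ‖G i‖ := Finset.sum_nonneg fun i _ => norm_nonneg _
    linarith
  have hC0 : 0 < C := by linarith
  have hCb : ∀ (i : Fin m) (x : Ω), |G i x| ≤ C := by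
    intro i x
    have h1 : |G i x| ≤ ‖G i‖ := (G i).norm_coe_le_norm x
    have h2 : ‖G i‖ ≤ ∑ i, ‖G i‖ :=
      Finset.single_le_sum (fun i _ => norm_nonneg (G i)) (Finset.mem_univ i)
    linarith
  -- get a convex combination close to the integral vector
  obtain ⟨w, hwmem, hwd⟩ := Metric.mem_closure_iff.1 (ud_mem_closure P hM G) (ε/2) (by linarith)
  have hwv : ∀ i, |w i - ∫ x, G i x ∂P| ≤ ε/2 := by
    intro i
    have h := dist_le_pi_dist w (fun i => ∫ x, G i x ∂P) i
    rw [Real.dist_eq] at h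
    have h2 : dist w (fun i => ∫ x, G i x ∂P) ≤ ε/2 := by
      rw [dist_comm]; exact hwd.le
    linarith [h.trans h2]
  rw [_root_.convexHull_eq] at hwmem
  obtain ⟨ι, t, a, z, ha0, ha1, hz, hcm⟩ := hwmem
  have hzu : ∀ i : ι, ∃ p : Ω, i ∈ t → p ∈ M ∧ ∀ l, G l p = z i l := by
    intro i
    by_cases h : i ∈ t
    · obtain ⟨p, hpM, hpE⟩ := hz i h
      exact ⟨p, fun _ => ⟨hpM, fun l => congrFun hpE l⟩⟩
    · exact ⟨Classical.arbitrary Ω, fun h' => absurd h' h⟩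
  choose u hu using hzu
  -- t is nonempty
  have htne : t.Nonempty := by
    rcases Finset.eq_empty_or_nonempty t with h | h
    · rw [h] at ha1; simp at ha1
    · exact h
  set k : ℕ := t.card with hk
  have hk1 : 1 ≤ k := Finset.card_pos.2 htne
  have hk0 : (0:ℝ) < k := by exact_mod_cast hk1
  -- choose K
  set K : ℕ := k + ⌈4*C*k/ε⌉₊ + 1 with hK
  have hKk : (4*C*k/ε : ℝ) < (K:ℝ) - k := by
    have h1 : (4*C*k/ε : ℝ) ≤ ⌈4*C*k/ε⌉₊ := Nat.le_ceil _
    have : (K:ℝ) = k + ⌈4*C*k/ε⌉₊ + 1 := by push_cast [hK]; ring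
    linarith
  have hKkpos : (0:ℝ) < (K:ℝ) - k := by
    have : (0:ℝ) < 4*C*k/ε := by positivity
    linarith
  set n : ι → ℕ := fun i => ⌊(K:ℝ) * a i⌋₊ with hn
  set L : ℕ := ∑ i ∈ t, n i with hL
  have hna : ∀ i ∈ t, ((n i : ℝ) ≤ K * a i ∧ K * a i - 1 < n i) := by
    intro i hi
    constructor
    · exact Nat.floor_le (mul_nonneg (Nat.cast_nonneg K) (ha0 i hi))
    · linarith [Nat.lt_floor_add_one ((K:ℝ) * a i)]
  have hLlow : (K:ℝ) - k < L := by
    have h1 : ∑ i ∈ t, ((K:ℝ) * a i - 1) < ∑ i ∈ t, (n i : ℝ) :=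
      Finset.sum_lt_sum_of_nonempty htne fun i hi => (hna i hi).2
    have h2 : ∑ i ∈ t, ((K:ℝ) * a i - 1) = (K:ℝ) - k := by
      rw [Finset.sum_sub_distrib, ← Finset.mul_sum, ha1]
      simp [hk]
    rw [h2] at h1
    simpa [hL] using h1
  have hL0 : 0 < L := by
    by_contra h
    push_neg at h
    interval_cases L
    · simp at hLlow; linarith
  have hLK : (L:ℝ) ≤ K := by
    have h1 : ∑ i ∈ t, (n i : ℝ) ≤ ∑ i ∈ t, (K:ℝ) * a i :=
      Finset.sum_le_sum fun i hi => (hna i hi).1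
    have h2 : ∑ i ∈ t, (K:ℝ) * a i = K := by rw [← Finset.mul_sum, ha1, mul_one]
    rw [h2] at h1
    simpa [hL] using h1
  have hLpos : (0:ℝ) < L := by exact_mod_cast hL0
  obtain ⟨y, hyM, hysum⟩ := ud_tuple M t n u (fun i hi => (hu i hi).1)
  refine ⟨L, hL0, y, hyM, fun i => ?_⟩
  have hsum : ∑ j, G i (y j) = ∑ l ∈ t, (n l : ℝ) * G i (u l) := hysum (G i)
  -- step 1 : |∑ n_l v_l - L * ∑ a_l v_l| ≤ 2kC
  have hstep1 : |∑ l ∈ t, (n l : ℝ) * G i (u l) - (L:ℝ) * ∑ l ∈ t, a l * G i (u l)| ≤ 2*k*C := by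
    rw [Finset.mul_sum, ← Finset.sum_sub_distrib]
    calc |∑ l ∈ t, ((n l : ℝ) * G i (u l) - (L:ℝ) * (a l * G i (u l)))|
        ≤ ∑ l ∈ t, |(n l : ℝ) * G i (u l) - (L:ℝ) * (a l * G i (u l))| :=
          Finset.abs_sum_le_sum_abs _ _
      _ ≤ ∑ l ∈ t, (1 + k * a l) * C := by
          apply Finset.sum_le_sum
          intro l hl
          have h1 : (n l : ℝ) * G i (u l) - (L:ℝ) * (a l * G i (u l))
              = ((n l : ℝ) - (L:ℝ) * a l) * G i (u l) := by ring
          rw [h1, abs_mul]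
          have h2 : |(n l : ℝ) - (L:ℝ) * a l| ≤ 1 + k * a l := by
            have h3 := (hna l hl).1
            have h4 := (hna l hl).2
            have h5 : (0:ℝ) ≤ a l := ha0 l hl
            have h6 : ((K:ℝ) - L) * a l ≤ k * a l := by
              apply mul_le_mul_of_nonneg_right _ h5
              linarith
            have h7 : (0:ℝ) ≤ ((K:ℝ) - L) * a l := mul_nonneg (by linarith) h5
            rw [abs_le]
            constructor <;> nlinarith
          have h8 : (0:ℝ) ≤ 1 + k * a l := by
            have := mul_nonneg hk0.le (ha0 l hl)
            linarith
          exact mul_le_mul h2 (hCb i (u l)) (abs_nonneg _) h8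
      _ = ∑ l ∈ t, (C + (k*C) * a l) := by
          apply Finset.sum_congr rfl
          intro l _
          ring
      _ = 2*k*C := by
          rw [Finset.sum_add_distrib, Finset.sum_const, ← Finset.mul_sum, ha1]
          simp [hk]
          ring
  have hwi : w i = ∑ l ∈ t, a l * G i (u l) := by
    have h1 := Finset.centerMass_eq_of_sum_1 t z ha1
    rw [h1] at hcm
    have h2 : w i = ∑ l ∈ t, a l * z l i := by
      rw [← hcm]; simp
    rw [h2]
    exact Finset.sum_congr rfl fun l hl => by rw [(hu l hl).2 i]
  have key : |(∑ l ∈ t, (n l:ℝ) * G i (u l))/(L:ℝ) - ∑ l ∈ t, a l * G i (u l)| ≤ ε/2 := by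
    have hrw : (∑ l ∈ t, (n l:ℝ) * G i (u l))/(L:ℝ) - ∑ l ∈ t, a l * G i (u l)
        = (∑ l ∈ t, (n l:ℝ) * G i (u l) - (L:ℝ) * ∑ l ∈ t, a l * G i (u l))/(L:ℝ) := by
      field_simp
    rw [hrw, abs_div, abs_of_pos hLpos]
    have h4 : 4*C*(k:ℝ) < ((K:ℝ) - k)*ε := (div_lt_iff₀ hε).1 hKk
    have h2kC : |∑ l ∈ t, (n l:ℝ) * G i (u l) - (L:ℝ) * ∑ l ∈ t, a l * G i (u l)| / (L:ℝ)
        ≤ 2*k*C/(L:ℝ) := by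
      gcongr
    have h2kC' : 2*(k:ℝ)*C/(L:ℝ) ≤ ε/2 := by
      rw [div_le_iff₀ hLpos]
      nlinarith
    linarith
  rw [hsum]
  calc |(∑ l ∈ t, (n l:ℝ) * G i (u l))/(L:ℝ) - ∫ x, G i x ∂P|
      ≤ |(∑ l ∈ t, (n l:ℝ) * G i (u l))/(L:ℝ) - w i| + |w i - ∫ x, G i x ∂P| :=
        abs_sub_le _ _ _
    _ ≤ ε/2 + ε/2 := add_le_add (hwi ▸ key) (hwv i)
    _ = ε := by ring

end UDAux

open Finset in
set_option maxHeartbeats 2000000 in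
theorem exists_uniformlyDistributed_in_dense_subset {Ω : Type*} [MetricSpace Ω]
    [CompactSpace Ω] [MeasurableSpace Ω] [BorelSpace Ω]
    (P : Measure Ω) [IsProbabilityMeasure P] (M : Set Ω) (hM : Dense M) :
    ∃ x : ℕ → Ω, (∀ n, x n ∈ M) ∧ UniformlyDistributed P x := by
  classical
  have hne : Nonempty Ω := by
    by_contra h
    rw [not_nonempty_iff] at h
    have := measure_univ (μ := P)
    simp [Set.univ_eq_empty_iff.2 h] at this
  -- dense sequence of continuous functions
  obtain ⟨gs, hgs⟩ := TopologicalSpace.exists_dense_seq C(Ω, ℝ)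
  -- patterns
  have hpat : ∀ m : ℕ, ∃ L : ℕ, 0 < L ∧ ∃ y : Fin L → Ω, (∀ j, y j ∈ M) ∧
      ∀ i : Fin (m+1), |(∑ j, gs i (y j)) / L - ∫ x, gs i x ∂P| ≤ 1/(m+1) :=
    fun m => ud_pattern P hM (fun i : Fin (m+1) => gs i) (by positivity)
  choose L hL y hyM happ using hpat
  -- periodic extensions of the patterns
  set f : ℕ → ℕ → Ω := fun m j => y m ⟨j % L m, Nat.mod_lt _ (hL m)⟩ with hf
  have hfM : ∀ m j, f m j ∈ M := fun m j => hyM m _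
  have hfper : ∀ m j, f m j = f m (j % L m) := by
    intro m j
    simp only [hf]
    congr 1
    exact Fin.ext (Nat.mod_eq_of_lt (Nat.mod_lt _ (hL m))).symm
  have hfsum : ∀ m (g : Ω → ℝ), ∑ j ∈ range (L m), g (f m j) = ∑ j : Fin (L m), g (y m j) := by
    intro m g
    rw [← Fin.sum_univ_eq_sum_range]
    apply Finset.sum_congr rfl
    intro j _
    congr 1
    simp only [hf]
    congr 1
    exact Fin.ext (Nat.mod_eq_of_lt j.2)
  -- the block boundaries
  obtain ⟨N, hN0, hNrec⟩ : ∃ N : ℕ → ℕ, N 0 = 0 ∧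
      ∀ m, N (m+1) = N m + L m * ((m+1) * (N m + L m + L (m+1)) + 1) :=
    ⟨fun n => Nat.rec 0 (fun m Nm => Nm + L m * ((m+1) * (Nm + L m + L (m+1)) + 1)) n,
      rfl, fun m => rfl⟩
  have hNmono : ∀ m, N m < N (m+1) := by
    intro m
    rw [hNrec m]
    have h0 : 0 < L m * ((m+1) * (N m + L m + L (m+1)) + 1) :=
      Nat.mul_pos (hL m) (by omega)
    omega
  have hNmono' : Monotone N := monotone_nat_of_le_succ fun m => (hNmono m).le
  have hNgrow : ∀ m, (m+1) * (N m + L m + L (m+1)) ≤ N (m+1) := by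
    intro m
    rw [hNrec m]
    have h2 : 1 * ((m+1) * (N m + L m + L (m+1)) + 1)
        ≤ L m * ((m+1) * (N m + L m + L (m+1)) + 1) :=
      Nat.mul_le_mul_right _ (hL m)
    omega
  have hNm : ∀ m, m ≤ N m := by
    intro m
    induction m with
    | zero => omega
    | succ m ih => have := hNmono m; omega
  -- the index function
  have hex : ∀ n, ∃ m, n < N (m+1) := fun n => ⟨n, by have := hNm (n+1); omega⟩
  obtain ⟨idx, hidxspec, hidxmin⟩ : ∃ idx : ℕ → ℕ,
      (∀ n, n < N (idx n + 1)) ∧ ∀ n m, n < N (m+1) → idx n ≤ m :=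
    ⟨fun n => Nat.find (hex n), fun n => Nat.find_spec (hex n), fun n m h => Nat.find_le h⟩
  have hidx : ∀ m n, N m ≤ n → n < N (m+1) → idx n = m := by
    intro m n h1 h2
    have ha := hidxmin n m h2
    rcases Nat.lt_or_ge (idx n) m with h | h
    · exfalso
      have : N (idx n + 1) ≤ N m := hNmono' (by omega)
      have := hidxspec n
      omega
    · omega
  -- the sequence
  refine ⟨fun n => f (idx n) (n - N (idx n)), fun n => hfM _ _, ?_⟩
  obtain ⟨x, hxeq, hxval⟩ : ∃ x : ℕ → Ω, (x = fun n => f (idx n) (n - N (idx n))) ∧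
      ∀ m j, j < N (m+1) - N m → x (N m + j) = f m j := by
    refine ⟨fun n => f (idx n) (n - N (idx n)), rfl, fun m j hj => ?_⟩
    have h1 : idx (N m + j) = m := hidx m (N m + j) (by omega) (by omega)
    simp only [h1, Nat.add_sub_cancel_left]
  rw [show (fun n => f (idx n) (n - N (idx n))) = x from hxeq.symm]
  clear hxeq hidx hidxspec hidxmin
  have hsum_block : ∀ (g : Ω → ℝ) m t, t ≤ N (m+1) - N m →
      ∑ n ∈ Ico (N m) (N m + t), g (x n) = ∑ j ∈ range t, g (f m j) := by
    intro g m t ht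
    rw [Finset.sum_Ico_eq_sum_range]
    have h1 : N m + t - N m = t := by omega
    rw [h1]
    apply Finset.sum_congr rfl
    intro j hj
    rw [Finset.mem_range] at hj
    rw [hxval m j (by omega)]
  -- convergence for each member of the dense family
  have tendsto_k : ∀ k : ℕ,
      Tendsto (fun N : ℕ => (∑ n ∈ Finset.range N, gs k (x n)) / N) atTop
        (𝓝 (∫ z, gs k z ∂P)) := by
    intro k
    set g : Ω → ℝ := fun z => gs k z with hg
    set I : ℝ := ∫ z, gs k z ∂P with hI
    set C : ℝ := ‖gs k‖ + 1 with hC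
    have hC0 : (0:ℝ) < C := by positivity
    have hgb : ∀ z, |g z| ≤ C := by
      intro z
      have := (gs k).norm_coe_le_norm z
      simp only [hg]
      rw [← Real.norm_eq_abs]
      linarith
    have hIb : |I| ≤ C := by
      have h1 : ‖∫ z, gs k z ∂P‖ ≤ ‖gs k‖ * (P Set.univ).toReal :=
        norm_integral_le_of_norm_le_const (ae_of_all _ fun z => (gs k).norm_coe_le_norm z)
      rw [← Real.norm_eq_abs]
      simp only [measure_univ, ENNReal.toReal_one, mul_one] at h1
      simp only [hI]
      linarith
    have happk : ∀ m, k ≤ m → |(∑ j ∈ range (L m), g (f m j)) / L m - I| ≤ 1/(m+1) := by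
      intro m hm
      have h1 := happ m ⟨k, by omega⟩
      rw [hfsum m g]
      exact h1
    have blockest : ∀ m, k ≤ m → ∀ t,
        |∑ j ∈ range t, g (f m j) - t * I| ≤ t * (1/(m+1)) + 2*C*(L m) :=
      fun m hm t => ud_block_est g C I (1/(m+1)) hgb hIb (hL m) (f m) (hfper m)
        (happk m hm) t
    have crude : ∀ n : ℕ, |∑ i ∈ range n, g (x i) - n * I| ≤ n * (2*C) := by
      intro n
      have h1 : ∑ i ∈ range n, g (x i) - (n:ℝ) * I = ∑ i ∈ range n, (g (x i) - I) := by
        rw [Finset.sum_sub_distrib, Finset.sum_const, Finset.card_range]; ring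
      rw [h1]
      calc |∑ i ∈ range n, (g (x i) - I)| ≤ ∑ i ∈ range n, |g (x i) - I| :=
            Finset.abs_sum_le_sum_abs _ _
        _ ≤ ∑ i ∈ range n, 2*C := by
            apply Finset.sum_le_sum
            intro i _
            calc |g (x i) - I| ≤ |g (x i)| + |I| := abs_sub _ _
              _ ≤ 2*C := by linarith [hgb (x i)]
        _ = n * (2*C) := by rw [Finset.sum_const, Finset.card_range]; simp
    have main_est : ∀ m, k ≤ m → ∀ n : ℕ, N (m+1) < n → n ≤ N (m+2) →
        |∑ i ∈ range n, g (x i) - n * I|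
          ≤ 2*C*((N m : ℝ) + L m + L (m+1)) + n * (1/(m+1)) := by
      intro m hkm n h1 h2
      set t : ℕ := N (m+1) - N m with htd
      set t' : ℕ := n - N (m+1) with ht'd
      have hNm1 : N m ≤ N (m+1) := (hNmono m).le
      have hNm2 : N (m+1) ≤ N (m+2) := (hNmono (m+1)).le
      have hsplit : ∑ i ∈ range n, g (x i)
          = ∑ i ∈ range (N m), g (x i) + ∑ j ∈ range t, g (f m j)
            + ∑ j ∈ range t', g (f (m+1) j) := by
        have e1 : ∑ i ∈ range n, g (x i) = ∑ i ∈ range (N m), g (x i)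
            + ∑ i ∈ Ico (N m) (N (m+1)), g (x i) + ∑ i ∈ Ico (N (m+1)) n, g (x i) := by
          rw [range_eq_Ico,
            ← Finset.sum_Ico_consecutive (fun i => g (x i)) (Nat.zero_le (N (m+1)))
              (le_of_lt h1),
            ← Finset.sum_Ico_consecutive (fun i => g (x i)) (Nat.zero_le (N m)) hNm1,
            ← range_eq_Ico]
        have e2 : ∑ i ∈ Ico (N m) (N (m+1)), g (x i) = ∑ j ∈ range t, g (f m j) := by
          have : N (m+1) = N m + t := by omega
          rw [this]
          exact hsum_block g m t (by omega)
        have e3 : ∑ i ∈ Ico (N (m+1)) n, g (x i) = ∑ j ∈ range t', g (f (m+1) j) := by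
          have : n = N (m+1) + t' := by omega
          rw [this]
          exact hsum_block g (m+1) t' (show t' ≤ N (m+2) - N (m+1) by omega)
        rw [e1, e2, e3]
      have b1 := crude (N m)
      have b2 := blockest m hkm t
      have b3 := blockest (m+1) (by omega) t'
      have hcast : (n:ℝ) = (N m : ℝ) + t + t' := by
        have : n = N m + t + t' := by omega
        exact_mod_cast this
      have hsplitI : (n:ℝ) * I = (N m : ℝ) * I + (t:ℝ) * I + (t':ℝ) * I := by
        rw [hcast]; ring
      rw [hsplit, hsplitI]
      have tri : |∑ i ∈ range (N m), g (x i) + ∑ j ∈ range t, g (f m j)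
            + ∑ j ∈ range t', g (f (m+1) j)
            - ((N m : ℝ) * I + (t:ℝ) * I + (t':ℝ) * I)|
          ≤ |∑ i ∈ range (N m), g (x i) - (N m : ℝ) * I|
            + |∑ j ∈ range t, g (f m j) - (t:ℝ) * I|
            + |∑ j ∈ range t', g (f (m+1) j) - (t':ℝ) * I| := by
        have h4 := ud_abs4 (∑ i ∈ range (N m), g (x i) + ∑ j ∈ range t, g (f m j))
          (∑ j ∈ range t', g (f (m+1) j)) ((N m : ℝ) * I + (t:ℝ) * I) ((t':ℝ) * I)
        have h5 := ud_abs4 (∑ i ∈ range (N m), g (x i)) (∑ j ∈ range t, g (f m j))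
          ((N m : ℝ) * I) ((t:ℝ) * I)
        linarith
      have hfrac : (t:ℝ) * (1/(m+1)) + (t':ℝ) * (1/(m+2)) ≤ (n:ℝ) * (1/(m+1)) := by
        have hm1 : (0:ℝ) < (m:ℝ)+1 := by positivity
        have hm2 : (0:ℝ) < (m:ℝ)+2 := by positivity
        have h6 : (t':ℝ) * (1/(m+2)) ≤ (t':ℝ) * (1/(m+1)) := by
          apply mul_le_mul_of_nonneg_left _ (Nat.cast_nonneg t')
          rw [div_le_div_iff₀ hm2 hm1]
          linarith
        have h7 : (0:ℝ) ≤ (N m : ℝ) := Nat.cast_nonneg _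
        have h8 : (0:ℝ) ≤ 1/((m:ℝ)+1) := by positivity
        nlinarith [hcast]
      have hpush : ((m:ℝ)+1+1) = (m:ℝ)+2 := by ring
      have b3' : |∑ j ∈ range t', g (f (m+1) j) - (t':ℝ) * I|
          ≤ (t':ℝ) * (1/((m:ℝ)+2)) + 2*C*(L (m+1)) := by
        have : (((m+1 : ℕ)):ℝ) + 1 = (m:ℝ)+2 := by push_cast; ring
        rw [← this]
        exact_mod_cast b3
      calc |∑ i ∈ range (N m), g (x i) + ∑ j ∈ range t, g (f m j)
            + ∑ j ∈ range t', g (f (m+1) j)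
            - ((N m : ℝ) * I + (t:ℝ) * I + (t':ℝ) * I)|
          ≤ (N m : ℝ) * (2*C) + ((t:ℝ) * (1/(m+1)) + 2*C*(L m))
            + ((t':ℝ) * (1/((m:ℝ)+2)) + 2*C*(L (m+1))) := by
            refine le_trans tri ?_
            exact add_le_add (add_le_add b1 b2) b3'
        _ ≤ 2*C*((N m : ℝ) + L m + L (m+1)) + n * (1/(m+1)) := by
            have := hfrac
            nlinarith [hC0]
    -- conclude convergence
    rw [Metric.tendsto_atTop]
    intro ε hε
    obtain ⟨n0, hn0⟩ := exists_nat_gt ((2*C+1)/ε)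
    set m0 : ℕ := max k n0 with hm0
    refine ⟨N (m0+1) + 1, fun n hn => ?_⟩
    have hm0n : m0 ≤ n := by
      have := hNm (m0+1)
      omega
    have hPm0 : N (m0+1) < n := by omega
    obtain ⟨m, hm0m, hP, hupper⟩ : ∃ m, m0 ≤ m ∧ N (m+1) < n ∧ n ≤ N (m+2) := by
      refine ⟨Nat.findGreatest (fun m' => N (m'+1) < n) n,
        Nat.le_findGreatest (P := fun m' => N (m'+1) < n) hm0n hPm0, ?_, ?_⟩
      · exact Nat.findGreatest_spec (P := fun m' => N (m'+1) < n) hm0n hPm0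
      · have hP : N (Nat.findGreatest (fun m' => N (m'+1) < n) n + 1) < n :=
          Nat.findGreatest_spec (P := fun m' => N (m'+1) < n) hm0n hPm0
        by_contra hcon
        push_neg at hcon
        have hmn : Nat.findGreatest (fun m' => N (m'+1) < n) n + 1 ≤ n := by
          have := hNm (Nat.findGreatest (fun m' => N (m'+1) < n) n + 1)
          omega
        exact absurd hcon (Nat.findGreatest_is_greatest (P := fun m' => N (m'+1) < n)
          (k := Nat.findGreatest (fun m' => N (m'+1) < n) n + 1) (by omega) hmn)
    have hkm : k ≤ m := le_trans (le_max_left k n0) hm0m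
    have est := main_est m hkm n hP hupper
    have hn1 : 0 < n := by omega
    have hnR : (0:ℝ) < n := by exact_mod_cast hn1
    have hdist : dist ((∑ i ∈ range n, gs k (x i)) / n) I
        = |∑ i ∈ range n, g (x i) - n * I| / n := by
      rw [Real.dist_eq, ← abs_of_pos hnR, ← abs_div]
      congr 1
      field_simp
      simp only [abs_of_pos hnR, hg]; ring
    rw [hdist]
    -- key growth bound
    have hS : (0:ℝ) < (N m : ℝ) + L m + L (m+1) := by
      have := hL m
      have h1 : (1:ℝ) ≤ L m := by exact_mod_cast hL m
      have h2 : (0:ℝ) ≤ (N m : ℝ) := Nat.cast_nonneg _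
      have h3 : (0:ℝ) ≤ (L (m+1) : ℝ) := Nat.cast_nonneg _
      linarith
    have hgrow : ((m:ℝ)+1) * ((N m : ℝ) + L m + L (m+1)) ≤ n := by
      have h1 := hNgrow m
      have h2 : ((m+1) * (N m + L m + L (m+1)) : ℕ) ≤ n := by omega
      exact_mod_cast h2
    have hm1R : (0:ℝ) < (m:ℝ)+1 := by positivity
    have key1 : 2*C*((N m : ℝ) + L m + L (m+1)) / n ≤ 2*C/((m:ℝ)+1) := by
      rw [div_le_div_iff₀ hnR hm1R]
      have h3 : 2*C*(((m:ℝ)+1) * ((N m:ℝ) + L m + L (m+1))) ≤ 2*C*n :=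
        mul_le_mul_of_nonneg_left hgrow (by positivity)
      calc 2*C*((N m : ℝ) + L m + L (m+1)) * ((m:ℝ)+1)
          = 2*C*(((m:ℝ)+1) * ((N m:ℝ) + L m + L (m+1))) := by ring
        _ ≤ 2*C*(n:ℝ) := h3
        _ = 2*C*(n:ℝ) := rfl
    have key2 : |∑ i ∈ range n, g (x i) - n * I| / n
        ≤ 2*C/((m:ℝ)+1) + 1/((m:ℝ)+1) := by
      have h1 : |∑ i ∈ range n, g (x i) - n * I| / n
          ≤ (2*C*((N m : ℝ) + L m + L (m+1)) + n * (1/(m+1))) / n := by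
        gcongr
      have h3 : (n:ℝ) * (1/((m:ℝ)+1)) / n = 1/((m:ℝ)+1) := by
        rw [mul_comm, mul_div_assoc, div_self (ne_of_gt hnR), mul_one]
      have h2 : (2*C*((N m : ℝ) + L m + L (m+1)) + n * (1/(m+1))) / n
          = 2*C*((N m : ℝ) + L m + L (m+1)) / n + 1/((m:ℝ)+1) := by
        rw [add_div, h3]
      rw [h2] at h1
      linarith
    have hfin : 2*C/((m:ℝ)+1) + 1/((m:ℝ)+1) < ε := by
      have hmm0 : (m0:ℝ) ≤ m := by exact_mod_cast hm0m
      have hn0m : (n0:ℝ) ≤ (m:ℝ)+1 := by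
        have : n0 ≤ m0 := le_max_right k n0
        have : (n0:ℝ) ≤ m0 := by exact_mod_cast this
        linarith
      have hq : (2*C+1)/ε < (m:ℝ)+1 := lt_of_lt_of_le hn0 hn0m
      have h3 : 2*C+1 < ((m:ℝ)+1) * ε := by
        rw [div_lt_iff₀ hε] at hq
        linarith
      rw [← add_div, div_lt_iff₀ hm1R]
      linarith
    exact lt_of_le_of_lt key2 hfin
  -- conclude for all continuous functions
  intro g
  rw [Metric.tendsto_atTop]
  intro ε hε
  obtain ⟨k, hk⟩ := Metric.denseRange_iff.1 hgs g (ε/4) (by linarith)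
  have hdk : ∀ z, |g z - gs k z| ≤ ε/4 := by
    intro z
    have := ContinuousMap.dist_apply_le_dist (f := g) (g := gs k) z
    rw [Real.dist_eq] at this
    linarith [this.trans hk.le]
  have hint : |(∫ z, g z ∂P) - ∫ z, gs k z ∂P| ≤ ε/4 := by
    have h1 : (∫ z, g z ∂P) - ∫ z, gs k z ∂P = ∫ z, (g z - gs k z) ∂P := by
      rw [integral_sub (ud_integrable P g.continuous) (ud_integrable P (gs k).continuous)]
    rw [h1, ← Real.norm_eq_abs]
    have h2 : ‖∫ z, (g z - gs k z) ∂P‖ ≤ (ε/4) * (P Set.univ).toReal :=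
      norm_integral_le_of_norm_le_const (ae_of_all _ fun z => by
        rw [Real.norm_eq_abs]; exact hdk z)
    simpa using h2
  obtain ⟨N0, hN0'⟩ := Metric.tendsto_atTop.1 (tendsto_k k) (ε/4) (by linarith)
  refine ⟨max N0 1, fun n hn => ?_⟩
  have hn1 : 1 ≤ n := le_trans (le_max_right N0 1) hn
  have hnR : (0:ℝ) < n := by exact_mod_cast hn1
  have havg : |(∑ i ∈ range n, g (x i)) / n - (∑ i ∈ range n, gs k (x i)) / n| ≤ ε/4 := by
    rw [div_sub_div_same, ← Finset.sum_sub_distrib, abs_div, abs_of_pos hnR]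
    rw [div_le_iff₀ hnR]
    calc |∑ i ∈ range n, (g (x i) - gs k (x i))|
        ≤ ∑ i ∈ range n, |g (x i) - gs k (x i)| := Finset.abs_sum_le_sum_abs _ _
      _ ≤ ∑ i ∈ range n, (ε/4) := Finset.sum_le_sum fun i _ => hdk (x i)
      _ = (ε/4) * n := by rw [Finset.sum_const, Finset.card_range]; ring
  have hconv := hN0' n (le_trans (le_max_left N0 1) hn)
  rw [Real.dist_eq] at hconv
  rw [Real.dist_eq]
  have tri : |(∑ i ∈ range n, g (x i)) / n - ∫ z, g z ∂P|
      ≤ |(∑ i ∈ range n, g (x i)) / n - (∑ i ∈ range n, gs k (x i)) / n|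
        + |(∑ i ∈ range n, gs k (x i)) / n - ∫ z, gs k z ∂P|
        + |(∫ z, gs k z ∂P) - ∫ z, g z ∂P| := by
    have := abs_sub_le ((∑ i ∈ range n, g (x i)) / n) ((∑ i ∈ range n, gs k (x i)) / n)
      (∫ z, g z ∂P)
    have := abs_sub_le ((∑ i ∈ range n, gs k (x i)) / n) (∫ z, gs k z ∂P) (∫ z, g z ∂P)
    linarith
  have habs : |(∫ z, gs k z ∂P) - ∫ z, g z ∂P| ≤ ε/4 := by
    rw [abs_sub_comm]; exact hint
  calc |(∑ i ∈ range n, g (x i)) / n - ∫ z, g z ∂P|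
      ≤ ε/4 + ε/4 + ε/4 := by linarith
    _ < ε := by linarith
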